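/- Let *₁ and *₂ be continuous t-norms on [0,1], and suppose there is an idempotent element q of *₁ and an order-isomorphism φ : [q,1] → [0,1] with φ(a *₁ b) = φ(a) *₂ φ(b) for all a,b ∈ [q,1]. Then an approach space (X, δ) is *₁-metrizable if and only if it is *₂-metrizable. -/

import Mathlib

open scoped ENNReal

/-- A distance distribution: a map `[0,∞] → [0,1]` with value `0` at `0`, `1` at `∞`,
monotone and left-continuous on `(0,∞)`. -/
structure IsDistanceDistribution (φ : ℝ≥0∞ → ℝ) : Prop where
  mem : ∀ t, φ t ∈ Set.Icc (0:ℝ) 1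
  zero : φ 0 = 0
  top : φ ⊤ = 1
  mono : Monotone φ
  leftCont : ∀ t : ℝ≥0∞, 0 < t → t ≠ ⊤ → φ t = ⨆ s : {s : ℝ≥0∞ // s < t}, φ s.1

/-- A continuous t-norm on the interval `[a,b] ⊆ ℝ`. -/
structure IsContinuousTNorm (a b : ℝ) (m : ℝ → ℝ → ℝ) : Prop where
  mem : ∀ ⦃p q : ℝ⦄, p ∈ Set.Icc a b → q ∈ Set.Icc a b → m p q ∈ Set.Icc a b
  comm : ∀ ⦃p q : ℝ⦄, p ∈ Set.Icc a b → q ∈ Set.Icc a b → m p q = m q p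
  assoc : ∀ ⦃p q r : ℝ⦄, p ∈ Set.Icc a b → q ∈ Set.Icc a b → r ∈ Set.Icc a b →
    m (m p q) r = m p (m q r)
  unit : ∀ ⦃p : ℝ⦄, p ∈ Set.Icc a b → m p b = p
  mono : ∀ ⦃p p' q q' : ℝ⦄, p ∈ Set.Icc a b → p' ∈ Set.Icc a b → q ∈ Set.Icc a b →
    q' ∈ Set.Icc a b → p ≤ p' → q ≤ q' → m p q ≤ m p' q'
  continuous : ContinuousOn (fun x : ℝ × ℝ => m x.1 x.2) (Set.Icc a b ×ˢ Set.Icc a b)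

/-- `α` is a probabilistic metric on `X` with respect to the t-norm `m` on `[0,1]`. -/
structure IsProbMetric {X : Type*} (m : ℝ → ℝ → ℝ) (α : X → X → ℝ≥0∞ → ℝ) : Prop where
  dd : ∀ x y, IsDistanceDistribution (α x y)
  refl : ∀ x (t : ℝ≥0∞), 0 < t → α x x t = 1
  symm : ∀ x y t, α x y t = α y x t
  sep : ∀ x y, (∀ t : ℝ≥0∞, 0 < t → α x y t = 1) → x = y
  triangle : ∀ x y z (r s : ℝ≥0∞), m (α y z r) (α x y s) ≤ α x z (r + s)

/-- The approach distance induced by a probabilistic metric: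
`δ_α(x,A) = inf { r | sup_{a ∈ A} α(x,a,r) = 1 }`. -/
noncomputable def probDist {X : Type*} (α : X → X → ℝ≥0∞ → ℝ) (x : X) (A : Set X) : ℝ≥0∞ :=
  sInf {r : ℝ≥0∞ | sSup ((fun a => α x a r) '' A) = 1}

/-- `δ` is an approach structure on `X`. -/
structure IsApproach {X : Type*} (δ : X → Set X → ℝ≥0∞) : Prop where
  point : ∀ x, δ x {x} = 0
  empty : ∀ x, δ x (∅ : Set X) = ⊤
  union : ∀ x A B, δ x (A ∪ B) = min (δ x A) (δ x B)
  triangle : ∀ x (A B : Set X), δ x A ≤ (⨆ b : B, δ b.1 A) + δ x B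

/-- An approach structure is probabilistic metrizable w.r.t. the t-norm `m`. -/
def ProbMetrizable {X : Type*} (m : ℝ → ℝ → ℝ) (δ : X → Set X → ℝ≥0∞) : Prop :=
  ∃ α : X → X → ℝ≥0∞ → ℝ, IsProbMetric m α ∧ ∀ x A, δ x A = probDist α x A

/-- The minimum t-norm. -/
def minT : ℝ → ℝ → ℝ := fun p q => min p q
/-- The product t-norm. -/
def prodT : ℝ → ℝ → ℝ := fun p q => p * q
/-- The Łukasiewicz t-norm. -/
def lukT : ℝ → ℝ → ℝ := fun p q => max 0 (p + q - 1)

/-- `q⁻`: the largest idempotent element of `m` in `[a, q]`. -/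
noncomputable def idemBelow (a : ℝ) (m : ℝ → ℝ → ℝ) (q : ℝ) : ℝ :=
  sSup {p : ℝ | p ∈ Set.Icc a q ∧ m p p = p}

private lemma csSup_image_of_strictMonoOn {f : ℝ → ℝ} {a b : ℝ}
    (hf : StrictMonoOn f (Set.Icc a b))
    (hsurj : ∀ c, f a ≤ c → c ≤ f b → ∃ d ∈ Set.Icc a b, f d = c)
    {S : Set ℝ} (hS : S ⊆ Set.Icc a b) (hne : S.Nonempty) :
    f (sSup S) = sSup (f '' S) := by
  obtain ⟨s₀, hs₀⟩ := hne
  have hab : a ≤ b := le_trans (hS hs₀).1 (hS hs₀).2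
  have hbdd : BddAbove S := ⟨b, fun s hs => (hS hs).2⟩
  have hMb : sSup S ≤ b := csSup_le ⟨s₀, hs₀⟩ (fun s hs => (hS hs).2)
  have hMa : a ≤ sSup S := le_trans (hS hs₀).1 (le_csSup hbdd hs₀)
  have hM : sSup S ∈ Set.Icc a b := ⟨hMa, hMb⟩
  have hlub : IsLUB (f '' S) (f (sSup S)) := by
    constructor
    · rintro y ⟨s, hs, rfl⟩
      exact hf.monotoneOn (hS hs) hM (le_csSup hbdd hs)
    · intro c hc
      by_contra hlt
      push_neg at hlt
      have hca : f a ≤ c :=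
        le_trans (hf.monotoneOn (Set.left_mem_Icc.2 hab) (hS hs₀) (hS hs₀).1)
          (hc ⟨s₀, hs₀, rfl⟩)
      have hcb : c ≤ f b := le_trans hlt.le (hf.monotoneOn hM (Set.right_mem_Icc.2 hab) hMb)
      obtain ⟨d, hd, rfl⟩ := hsurj c hca hcb
      have hdM : d < sSup S := by
        by_contra h
        push_neg at h
        exact absurd (hf.monotoneOn hM hd h) (not_le.2 hlt)
      obtain ⟨s, hs, hds⟩ := exists_lt_of_lt_csSup ⟨s₀, hs₀⟩ hdM
      exact absurd (hc ⟨s, hs, rfl⟩) (not_le.2 (hf hd (hS hs) hds))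
  exact (hlub.csSup_eq ⟨_, ⟨s₀, hs₀, rfl⟩⟩).symm
private lemma transferPM {X : Type*} {mo mn : ℝ → ℝ → ℝ}
    (ho : IsContinuousTNorm 0 1 mo) (hn : IsContinuousTNorm 0 1 mn)
    (g : ℝ → ℝ)
    (hg_mem : ∀ p ∈ Set.Icc (0:ℝ) 1, g p ∈ Set.Icc (0:ℝ) 1)
    (hg_mono : MonotoneOn g (Set.Icc (0:ℝ) 1))
    (hg_one : g 1 = 1)
    (hg_eq_one : ∀ p ∈ Set.Icc (0:ℝ) 1, g p = 1 → p = 1)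
    (hg_sup : ∀ S : Set ℝ, S ⊆ Set.Icc (0:ℝ) 1 → S.Nonempty → g (sSup S) = sSup (g '' S))
    (hg_hom : ∀ a ∈ Set.Icc (0:ℝ) 1, ∀ b ∈ Set.Icc (0:ℝ) 1, mn (g a) (g b) ≤ g (mo a b))
    (α : X → X → ℝ≥0∞ → ℝ) (hα : IsProbMetric mo α) :
    ∃ β : X → X → ℝ≥0∞ → ℝ, IsProbMetric mn β ∧ ∀ x A, probDist β x A = probDist α x A := by
  classical
  have h0I : (0:ℝ) ∈ Set.Icc (0:ℝ) 1 := Set.left_mem_Icc.2 zero_le_one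
  have h1I : (1:ℝ) ∈ Set.Icc (0:ℝ) 1 := Set.right_mem_Icc.2 zero_le_one
  have hmem : ∀ x y t, α x y t ∈ Set.Icc (0:ℝ) 1 := fun x y t => (hα.dd x y).mem t
  refine ⟨fun x y t => if t = 0 then 0 else g (α x y t), ?_, ?_⟩
  case _ =>
    have hβmem : ∀ x y t,
        (if t = 0 then (0:ℝ) else g (α x y t)) ∈ Set.Icc (0:ℝ) 1 := by
      intro x y t
      split
      · exact h0I
      · exact hg_mem _ (hmem x y t)
    have mn_zero : ∀ p ∈ Set.Icc (0:ℝ) 1, mn 0 p = 0 := by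
      intro p hp
      refine le_antisymm ?_ (hn.mem h0I hp).1
      calc mn 0 p ≤ mn 0 1 := hn.mono h0I h0I hp h1I le_rfl hp.2
        _ = 0 := hn.unit h0I
    constructor
    · -- dd
      intro x y
      constructor
      · exact hβmem x y
      · simp
      · rw [if_neg ENNReal.top_ne_zero, (hα.dd x y).top, hg_one]
      · intro t t' htt'
        dsimp only
        by_cases ht : t = 0
        · rw [if_pos ht]
          exact (hβmem x y t').1
        · have ht' : t' ≠ 0 := fun h => ht (le_antisymm (h ▸ htt') zero_le)
          rw [if_neg ht, if_neg ht']
          exact hg_mono (hmem x y t) (hmem x y t') ((hα.dd x y).mono htt')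
      · intro t ht htop
        rw [if_neg ht.ne']
        have hbdd : BddAbove (Set.range fun s : {s : ℝ≥0∞ // s < t} =>
            if s.1 = 0 then (0:ℝ) else g (α x y s.1)) := by
          refine ⟨1, ?_⟩
          rintro _ ⟨s, rfl⟩
          exact (hβmem x y s.1).2
        have hne : Nonempty {s : ℝ≥0∞ // s < t} := ⟨⟨0, ht⟩⟩
        refine le_antisymm ?_ ?_
        · -- g (α x y t) ≤ iSup
          have hrange : (α x y) '' {s | s < t} =
              Set.range (fun s : {s : ℝ≥0∞ // s < t} => α x y s.1) := by
            rw [Set.image_eq_range]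
            rfl
          have hsup : sSup ((α x y) '' {s | s < t}) = α x y t := by
            rw [hrange, sSup_range]
            exact ((hα.dd x y).leftCont t ht htop).symm
          have hTsub : (α x y) '' {s | s < t} ⊆ Set.Icc (0:ℝ) 1 := by
            rintro _ ⟨s, _, rfl⟩
            exact hmem x y s
          have hTne : ((α x y) '' {s | s < t}).Nonempty := ⟨_, ⟨0, ht, rfl⟩⟩
          rw [← hsup, hg_sup _ hTsub hTne]
          refine csSup_le (hTne.image g) ?_
          rintro _ ⟨_, ⟨s, hs, rfl⟩, rfl⟩
          by_cases hs0 : s = 0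
          · subst hs0
            obtain ⟨s', hs'0, hs't⟩ : ∃ s' : ℝ≥0∞, 0 < s' ∧ s' < t :=
              ⟨t / 2, ENNReal.half_pos ht.ne', ENNReal.half_lt_self ht.ne' htop⟩
            have : g (α x y 0) ≤ g (α x y s') :=
              hg_mono (hmem x y 0) (hmem x y s') ((hα.dd x y).mono zero_le)
            refine le_trans this ?_
            refine le_trans ?_ (le_ciSup hbdd ⟨s', hs't⟩)
            rw [if_neg hs'0.ne']
          · refine le_trans ?_ (le_ciSup hbdd ⟨s, hs⟩)
            rw [if_neg hs0]
        · refine ciSup_le ?_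
          rintro ⟨s, hs⟩
          by_cases hs0 : s = 0
          · simp only [hs0, if_pos]
            exact (hg_mem _ (hmem x y t)).1
          · simp only [if_neg hs0]
            exact hg_mono (hmem x y s) (hmem x y t) ((hα.dd x y).mono hs.le)
    · -- refl
      intro x t ht
      rw [if_neg ht.ne', hα.refl x t ht, hg_one]
    · -- symm
      intro x y t
      simp only [hα.symm x y t]
    · -- sep
      intro x y h
      refine hα.sep x y ?_
      intro t ht
      have := h t ht
      rw [if_neg ht.ne'] at this
      exact hg_eq_one _ (hmem x y t) this
    · -- triangle
      intro x y z r s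
      by_cases hr : r = 0
      · subst hr
        rw [if_pos rfl]
        have : mn 0 (if s = 0 then (0:ℝ) else g (α x y s)) = 0 := mn_zero _ (hβmem x y s)
        rw [this]
        exact (hβmem x z (0 + s)).1
      · by_cases hs : s = 0
        · subst hs
          rw [if_pos rfl, hn.comm (hβmem y z r) h0I, mn_zero _ (hβmem y z r)]
          exact (hβmem x z (r + 0)).1
        · have hrs : r + s ≠ 0 := by simp [hr, hs]
          rw [if_neg hr, if_neg hs, if_neg hrs]
          calc mn (g (α y z r)) (g (α x y s)) ≤ g (mo (α y z r) (α x y s)) :=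
                hg_hom _ (hmem y z r) _ (hmem x y s)
            _ ≤ g (α x z (r + s)) :=
                hg_mono (ho.mem (hmem y z r) (hmem x y s)) (hmem x z (r + s))
                  (hα.triangle x y z r s)
  case _ =>
    intro x A
    have hset : {r : ℝ≥0∞ | sSup ((fun a => if r = 0 then (0:ℝ) else g (α x a r)) '' A) = 1}
        = {r : ℝ≥0∞ | sSup ((fun a => α x a r) '' A) = 1} := by
      ext r
      simp only [Set.mem_setOf_eq]
      rcases A.eq_empty_or_nonempty with rfl | hA
      · simp
      · by_cases hr : r = 0
        · subst hr
          have h1 : (fun a => if (0:ℝ≥0∞) = 0 then (0:ℝ) else g (α x a 0)) '' A = {0} := by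
            simp only [if_pos rfl]
            exact hA.image_const 0
          have h2 : (fun a => α x a 0) '' A = {0} := by
            have : (fun a => α x a 0) = fun _ : X => (0:ℝ) :=
              funext fun a => (hα.dd x a).zero
            rw [this]
            exact hA.image_const 0
          rw [h1, h2]
        · have h1 : (fun a => if r = 0 then (0:ℝ) else g (α x a r)) '' A
              = g '' ((fun a => α x a r) '' A) := by
            rw [Set.image_image]
            simp only [if_neg hr]
          rw [h1]
          set S := (fun a => α x a r) '' A with hS
          have hSsub : S ⊆ Set.Icc (0:ℝ) 1 := by
            rintro _ ⟨a, _, rfl⟩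
            exact hmem x a r
          have hSne : S.Nonempty := hA.image _
          rw [← hg_sup S hSsub hSne]
          have hSmem : sSup S ∈ Set.Icc (0:ℝ) 1 := by
            constructor
            · obtain ⟨p, hp⟩ := hSne
              exact le_trans (hSsub hp).1 (le_csSup ⟨1, fun y hy => (hSsub hy).2⟩ hp)
            · exact csSup_le hSne fun y hy => (hSsub hy).2
          constructor
          · intro h
            exact hg_eq_one _ hSmem h
          · intro h
            rw [h, hg_one]
    rw [probDist, probDist, hset]
theorem stmt13 {X : Type*} (m₁ m₂ : ℝ → ℝ → ℝ)
    (h₁ : IsContinuousTNorm 0 1 m₁) (h₂ : IsContinuousTNorm 0 1 m₂)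
    (q : ℝ) (hq : q ∈ Set.Icc (0:ℝ) 1) (hqi : m₁ q q = q)
    (φ : ℝ → ℝ) (hmono : StrictMonoOn φ (Set.Icc q 1))
    (himg : φ '' Set.Icc q 1 = Set.Icc 0 1)
    (hhom : ∀ a ∈ Set.Icc q 1, ∀ b ∈ Set.Icc q 1, φ (m₁ a b) = m₂ (φ a) (φ b))
    (δ : X → Set X → ℝ≥0∞) (hδ : IsApproach δ) :
    ProbMetrizable m₁ δ ↔ ProbMetrizable m₂ δ := by
  classical
  have hqm : q ∈ Set.Icc q 1 := Set.left_mem_Icc.2 hq.2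
  have h1m : (1:ℝ) ∈ Set.Icc q 1 := Set.right_mem_Icc.2 hq.2
  have hφmem : ∀ v ∈ Set.Icc q 1, φ v ∈ Set.Icc (0:ℝ) 1 := by
    intro v hv
    rw [← himg]
    exact Set.mem_image_of_mem φ hv
  have hφq : φ q = 0 := by
    obtain ⟨v, hv, hv0⟩ : ∃ v ∈ Set.Icc q 1, φ v = 0 := by
      have : (0:ℝ) ∈ φ '' Set.Icc q 1 := himg ▸ Set.left_mem_Icc.2 zero_le_one
      obtain ⟨v, hv, hv0⟩ := this
      exact ⟨v, hv, hv0⟩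
    exact le_antisymm (hv0 ▸ hmono.monotoneOn hqm hv hv.1) (hφmem q hqm).1
  have hφ1 : φ 1 = 1 := by
    obtain ⟨v, hv, hv1⟩ : ∃ v ∈ Set.Icc q 1, φ v = 1 := by
      have : (1:ℝ) ∈ φ '' Set.Icc q 1 := himg ▸ Set.right_mem_Icc.2 zero_le_one
      obtain ⟨v, hv, hv1⟩ := this
      exact ⟨v, hv, hv1⟩
    refine le_antisymm (hφmem 1 h1m).2 ?_
    have h3 := hmono.monotoneOn hv h1m hv.2
    rwa [hv1] at h3
  have hq1 : q < 1 := by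
    rcases lt_or_eq_of_le hq.2 with h | h
    · exact h
    · rw [h] at hφq
      rw [hφq] at hφ1
      norm_num at hφ1
  have hsurjφ : ∀ c, φ q ≤ c → c ≤ φ 1 → ∃ d ∈ Set.Icc q 1, φ d = c := by
    intro c hc1 hc2
    rw [hφq] at hc1
    rw [hφ1] at hc2
    have : c ∈ φ '' Set.Icc q 1 := himg ▸ Set.mem_Icc.2 ⟨hc1, hc2⟩
    obtain ⟨d, hd, hdc⟩ := this
    exact ⟨d, hd, hdc⟩
  -- the inverse map ψ : [0,1] → [q,1]
  have hψex : ∀ p : ℝ, ∃ v, p ∈ Set.Icc (0:ℝ) 1 → (v ∈ Set.Icc q 1 ∧ φ v = p) := by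
    intro p
    by_cases hp : p ∈ Set.Icc (0:ℝ) 1
    · obtain ⟨v, hv, hvp⟩ := hsurjφ p (by rw [hφq]; exact hp.1) (by rw [hφ1]; exact hp.2)
      exact ⟨v, fun _ => ⟨hv, hvp⟩⟩
    · exact ⟨q, fun h => absurd h hp⟩
  choose ψ hψ using hψex
  have hψmem : ∀ p ∈ Set.Icc (0:ℝ) 1, ψ p ∈ Set.Icc q 1 := fun p hp => (hψ p hp).1
  have hφψ : ∀ p ∈ Set.Icc (0:ℝ) 1, φ (ψ p) = p := fun p hp => (hψ p hp).2
  have hψφ : ∀ v ∈ Set.Icc q 1, ψ (φ v) = v := by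
    intro v hv
    exact hmono.injOn (hψmem _ (hφmem v hv)) hv (hφψ _ (hφmem v hv))
  have hψmono : StrictMonoOn ψ (Set.Icc (0:ℝ) 1) := by
    intro p hp p' hp' hlt
    by_contra h
    push_neg at h
    have h2 : p' ≤ p := by
      rw [← hφψ p hp, ← hφψ p' hp']
      exact hmono.monotoneOn (hψmem p' hp') (hψmem p hp) h
    exact absurd h2 (not_le.2 hlt)
  have hmaxmem : ∀ p ∈ Set.Icc (0:ℝ) 1, max q p ∈ Set.Icc q 1 :=
    fun p hp => ⟨le_max_left _ _, max_le hq.2 hp.2⟩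
  have hmax01 : ∀ p ∈ Set.Icc (0:ℝ) 1, max q p ∈ Set.Icc (0:ℝ) 1 :=
    fun p hp => ⟨le_max_of_le_left hq.1, max_le hq.2 hp.2⟩
  constructor
  · -- m₁ metrizable → m₂ metrizable, via g = φ ∘ max q
    rintro ⟨α, hα, hδα⟩
    have hg_mem : ∀ p ∈ Set.Icc (0:ℝ) 1, φ (max q p) ∈ Set.Icc (0:ℝ) 1 :=
      fun p hp => hφmem _ (hmaxmem p hp)
    have hg_mono : MonotoneOn (fun p => φ (max q p)) (Set.Icc (0:ℝ) 1) := by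
      intro p hp p' hp' h
      exact hmono.monotoneOn (hmaxmem p hp) (hmaxmem p' hp') (max_le_max le_rfl h)
    have hg_one : φ (max q 1) = 1 := by rw [max_eq_right hq.2, hφ1]
    have hg_eq_one : ∀ p ∈ Set.Icc (0:ℝ) 1, φ (max q p) = 1 → p = 1 := by
      intro p hp h
      have hmq : max q p = 1 := by
        refine hmono.injOn (hmaxmem p hp) h1m ?_
        rw [h, hφ1]
      rcases max_cases q p with ⟨h1, _⟩ | ⟨h1, _⟩
      · rw [h1] at hmq
        exact absurd hmq hq1.ne
      · rw [h1] at hmq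
        exact hmq
    have hg_sup : ∀ S : Set ℝ, S ⊆ Set.Icc (0:ℝ) 1 → S.Nonempty →
        φ (max q (sSup S)) = sSup ((fun p => φ (max q p)) '' S) := by
      intro S hS hne
      obtain ⟨s₀, hs₀⟩ := hne
      have hbdd : BddAbove S := ⟨1, fun s hs => (hS hs).2⟩
      have hmaxlub : IsLUB ((fun p => max q p) '' S) (max q (sSup S)) := by
        constructor
        · rintro _ ⟨s, hs, rfl⟩
          exact max_le_max le_rfl (le_csSup hbdd hs)
        · intro c hc
          refine max_le (le_trans (le_max_left q s₀) (hc ⟨s₀, hs₀, rfl⟩)) ?_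
          refine csSup_le ⟨s₀, hs₀⟩ fun s hs => le_trans (le_max_right q s) (hc ⟨s, hs, rfl⟩)
      have step1 : max q (sSup S) = sSup ((fun p => max q p) '' S) :=
        (hmaxlub.csSup_eq ⟨_, ⟨s₀, hs₀, rfl⟩⟩).symm
      have hTsub : (fun p => max q p) '' S ⊆ Set.Icc q 1 := by
        rintro _ ⟨s, hs, rfl⟩
        exact hmaxmem s (hS hs)
      have step2 : φ (sSup ((fun p => max q p) '' S)) = sSup (φ '' ((fun p => max q p) '' S)) :=
        csSup_image_of_strictMonoOn hmono hsurjφ hTsub ⟨_, ⟨s₀, hs₀, rfl⟩⟩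
      rw [step1, step2, Set.image_image]
    have hg_hom : ∀ a ∈ Set.Icc (0:ℝ) 1, ∀ b ∈ Set.Icc (0:ℝ) 1,
        m₂ (φ (max q a)) (φ (max q b)) ≤ φ (max q (m₁ a b)) := by
      intro a ha b hb
      have hqI : q ∈ Set.Icc (0:ℝ) 1 := hq
      have key : m₁ (max q a) (max q b) ≤ max q (m₁ a b) := by
        rcases le_total a q with h | h
        · rw [max_eq_left h]
          calc m₁ q (max q b) ≤ m₁ q 1 :=
                h₁.mono hqI hqI (hmax01 b hb) (Set.right_mem_Icc.2 zero_le_one) le_rfl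
                  (hmax01 b hb).2
            _ = q := h₁.unit hqI
            _ ≤ max q (m₁ a b) := le_max_left _ _
        · rcases le_total b q with h' | h'
          · rw [max_eq_left h', h₁.comm (hmax01 a ha) hqI]
            calc m₁ q (max q a) ≤ m₁ q 1 :=
                  h₁.mono hqI hqI (hmax01 a ha) (Set.right_mem_Icc.2 zero_le_one) le_rfl
                    (hmax01 a ha).2
              _ = q := h₁.unit hqI
              _ ≤ max q (m₁ a b) := le_max_left _ _
          · rw [max_eq_right h, max_eq_right h']
            exact le_max_right _ _
      have hmmem : m₁ (max q a) (max q b) ∈ Set.Icc q 1 := by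
        constructor
        · calc q = m₁ q q := hqi.symm
            _ ≤ m₁ (max q a) (max q b) :=
              h₁.mono hqI (hmax01 a ha) hqI (hmax01 b hb) (le_max_left _ _) (le_max_left _ _)
        · exact (h₁.mem (hmax01 a ha) (hmax01 b hb)).2
      calc m₂ (φ (max q a)) (φ (max q b)) = φ (m₁ (max q a) (max q b)) :=
            (hhom _ (hmaxmem a ha) _ (hmaxmem b hb)).symm
        _ ≤ φ (max q (m₁ a b)) :=
            hmono.monotoneOn hmmem (hmaxmem _ (h₁.mem ha hb)) key
    obtain ⟨β, hβ, hβδ⟩ := transferPM h₁ h₂ (fun p => φ (max q p)) hg_mem hg_mono hg_one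
      hg_eq_one hg_sup hg_hom α hα
    exact ⟨β, hβ, fun x A => (hδα x A).trans (hβδ x A).symm⟩
  · -- m₂ metrizable → m₁ metrizable, via g = ψ
    rintro ⟨α, hα, hδα⟩
    have hψ01 : ∀ p ∈ Set.Icc (0:ℝ) 1, ψ p ∈ Set.Icc (0:ℝ) 1 :=
      fun p hp => ⟨le_trans hq.1 (hψmem p hp).1, (hψmem p hp).2⟩
    have hψ0 : ψ 0 = q := by
      calc ψ 0 = ψ (φ q) := by rw [hφq]
        _ = q := hψφ q hqm
    have hψ1 : ψ 1 = 1 := by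
      calc ψ 1 = ψ (φ 1) := by rw [hφ1]
        _ = 1 := hψφ 1 h1m
    have hg_eq_one : ∀ p ∈ Set.Icc (0:ℝ) 1, ψ p = 1 → p = 1 := by
      intro p hp h
      rw [← hφψ p hp, h, hφ1]
    have hsurjψ : ∀ c, ψ 0 ≤ c → c ≤ ψ 1 → ∃ d ∈ Set.Icc (0:ℝ) 1, ψ d = c := by
      intro c hc1 hc2
      rw [hψ0] at hc1
      rw [hψ1] at hc2
      exact ⟨φ c, hφmem c ⟨hc1, hc2⟩, hψφ c ⟨hc1, hc2⟩⟩
    have hg_sup : ∀ S : Set ℝ, S ⊆ Set.Icc (0:ℝ) 1 → S.Nonempty →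
        ψ (sSup S) = sSup (ψ '' S) := by
      intro S hS hne
      exact csSup_image_of_strictMonoOn hψmono hsurjψ hS hne
    have hg_hom : ∀ a ∈ Set.Icc (0:ℝ) 1, ∀ b ∈ Set.Icc (0:ℝ) 1,
        m₁ (ψ a) (ψ b) ≤ ψ (m₂ a b) := by
      intro a ha b hb
      have hqI : q ∈ Set.Icc (0:ℝ) 1 := hq
      have hmmem : m₁ (ψ a) (ψ b) ∈ Set.Icc q 1 := by
        constructor
        · calc q = m₁ q q := hqi.symm
            _ ≤ m₁ (ψ a) (ψ b) :=
              h₁.mono hqI (hψ01 a ha) hqI (hψ01 b hb) (hψmem a ha).1 (hψmem b hb).1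
        · exact (h₁.mem (hψ01 a ha) (hψ01 b hb)).2
      have heq : m₁ (ψ a) (ψ b) = ψ (m₂ a b) := by
        rw [← hψφ _ hmmem, hhom _ (hψmem a ha) _ (hψmem b hb), hφψ a ha, hφψ b hb]
      exact le_of_eq heq
    obtain ⟨β, hβ, hβδ⟩ := transferPM h₂ h₁ ψ hψ01 hψmono.monotoneOn hψ1
      hg_eq_one hg_sup hg_hom α hα
    exact ⟨β, hβ, fun x A => (hδα x A).trans (hβδ x A).symm⟩
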